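/- Let a, b, s, t be positive integers with s ≤ a ≤ b ≤ t. Then for every positive integer n, ex(n, K_{a,b}, K_{s,t}) ≤ C(t-1,a)·C(t-1-s,b-s)·C(n,s), where C(m,k) denotes the binomial coefficient. (In particular ex(n, K_{a,b}, K_{s,t}) = O(n^s).) -/

import Mathlib

open SimpleGraph

/-- `F` is contained in `G` as a subgraph, i.e. there is an injective graph
homomorphism from `F` to `G`. -/
def ContainsCopy {α β : Type*} (F : SimpleGraph α) (G : SimpleGraph β) : Prop :=
  ∃ f : F →g G, Function.Injective f

/-- `N(H,G)`: the number of subgraphs of `G` isomorphic to `H`. -/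
noncomputable def copyCount {α β : Type*} (H : SimpleGraph α) (G : SimpleGraph β) : ℕ :=
  Nat.card {G' : G.Subgraph // Nonempty (H ≃g G'.coe)}

/-- `ex(n,H,F)`: the maximum number of copies of `H` in an `F`-free graph on `n` vertices. -/
noncomputable def exGen (n : ℕ) {α β : Type*} (H : SimpleGraph α) (F : SimpleGraph β) : ℕ :=
  sSup {m | ∃ G : SimpleGraph (Fin n), ¬ ContainsCopy F G ∧ m = copyCount H G}

/-- The complete bipartite graph `K_{a,b}`. -/
abbrev Kbip (a b : ℕ) : SimpleGraph (Fin a ⊕ Fin b) := completeBipartiteGraph (Fin a) (Fin b)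

/-- `K̄_{a,b}`: obtained from `K_{a,b}` by adding all edges inside the part of size `a`. -/
def KbipBar (a b : ℕ) : SimpleGraph (Fin a ⊕ Fin b) :=
  SimpleGraph.fromRel (fun u _ => u.isLeft)

/-- `k` vertex-disjoint copies of `G`. -/
def disjCopies (k : ℕ) {α : Type*} (G : SimpleGraph α) : SimpleGraph (Fin k × α) :=
  SimpleGraph.fromRel (fun u v => u.1 = v.1 ∧ G.Adj u.2 v.2)

/-- The vertex-disjoint union of `G` and `H`. -/
def disjSum {α β : Type*} (G : SimpleGraph α) (H : SimpleGraph β) : SimpleGraph (α ⊕ β) :=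
  SimpleGraph.fromRel (fun u v =>
    (∃ x y, u = Sum.inl x ∧ v = Sum.inl y ∧ G.Adj x y) ∨
    (∃ x y, u = Sum.inr x ∧ v = Sum.inr y ∧ H.Adj x y))

/-- Placing a graph `G0` on the `Fin b`-part of the vertex set `Fin a ⊕ Fin b`. -/
def liftRight (a : ℕ) {b : ℕ} (G0 : SimpleGraph (Fin b)) : SimpleGraph (Fin a ⊕ Fin b) :=
  SimpleGraph.fromRel (fun u v => ∃ x y, u = Sum.inr x ∧ v = Sum.inr y ∧ G0.Adj x y)

section Aux
open Finset
variable {n : ℕ}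

noncomputable def cn (G : SimpleGraph (Fin n)) (S : Finset (Fin n)) : Finset (Fin n) :=
  @Finset.filter _ (fun v => ∀ x ∈ S, G.Adj v x) (Classical.decPred _) Finset.univ

lemma mem_cn {G : SimpleGraph (Fin n)} {S : Finset (Fin n)} {v : Fin n} :
    v ∈ cn G S ↔ ∀ x ∈ S, G.Adj v x := by
  simp [cn]

noncomputable def pick (s : ℕ) (A : Finset (Fin n)) : Finset (Fin n) :=
  if h : s ≤ A.card then (Finset.exists_subset_card_eq h).choose else ∅

lemma pick_subset (s : ℕ) (A : Finset (Fin n)) : pick s A ⊆ A := by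
  unfold pick
  split
  · exact (Finset.exists_subset_card_eq ‹_›).choose_spec.1
  · exact Finset.empty_subset _

lemma pick_card {s : ℕ} {A : Finset (Fin n)} (h : s ≤ A.card) : (pick s A).card = s := by
  unfold pick
  rw [dif_pos h]
  exact (Finset.exists_subset_card_eq h).choose_spec.2

lemma cn_card_le {s t : ℕ} (ht : 0 < t) {G : SimpleGraph (Fin n)}
    (hfree : ¬ ContainsCopy (Kbip s t) G) {S : Finset (Fin n)} (hS : S.card = s) :
    (cn G S).card ≤ t - 1 := by
  by_contra hc
  push_neg at hc
  have htc : t ≤ (cn G S).card := by omega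
  obtain ⟨T, hTsub, hTcard⟩ := Finset.exists_subset_card_eq htc
  have hST : ∀ x ∈ S, ∀ y ∈ T, G.Adj x y := fun x hx y hy =>
    ((mem_cn.mp (hTsub hy)) x hx).symm
  have hdisj : ∀ x ∈ S, x ∉ T := by
    intro x hx hxT
    exact (G.loopless.irrefl x) (hST x hx x hxT)
  let f : Fin s ⊕ Fin t → Fin n :=
    Sum.elim (fun i => (S.orderIsoOfFin hS i : Fin n)) (fun j => (T.orderIsoOfFin hTcard j : Fin n))
  have hmemS : ∀ i, (S.orderIsoOfFin hS i : Fin n) ∈ S := fun i => (S.orderIsoOfFin hS i).2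
  have hmemT : ∀ j, (T.orderIsoOfFin hTcard j : Fin n) ∈ T := fun j => (T.orderIsoOfFin hTcard j).2
  have hadj : ∀ u v, (Kbip s t).Adj u v → G.Adj (f u) (f v) := by
    rintro (i | i) (j | j) h
    · simp at h
    · exact hST _ (hmemS i) _ (hmemT j)
    · exact (hST _ (hmemS j) _ (hmemT i)).symm
    · simp at h
  have hinj : Function.Injective f := by
    rintro (i | i) (j | j) h
    · exact congrArg Sum.inl ((S.orderIsoOfFin hS).injective (Subtype.ext h))
    · exfalso
      simp only [f, Sum.elim_inl, Sum.elim_inr] at h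
      exact hdisj _ (hmemS i) (h ▸ hmemT j)
    · exfalso
      simp only [f, Sum.elim_inl, Sum.elim_inr] at h
      exact hdisj _ (hmemS j) (h.symm ▸ hmemT i)
    · exact congrArg Sum.inr ((T.orderIsoOfFin hTcard).injective (Subtype.ext h))
  exact hfree ⟨⟨f, fun h => hadj _ _ h⟩, hinj⟩

lemma copy_struct {a b : ℕ} {G : SimpleGraph (Fin n)} {G' : G.Subgraph}
    (e : Kbip a b ≃g G'.coe)
    (A B : Finset (Fin n))
    (hA : A = Finset.univ.image (fun i : Fin a => ((e (Sum.inl i)) : Fin n)))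
    (hB : B = Finset.univ.image (fun j : Fin b => ((e (Sum.inr j)) : Fin n))) :
    A.card = a ∧ B.card = b ∧ G'.verts = ↑A ∪ ↑B ∧
      ∀ u v, G'.Adj u v ↔ ((u ∈ A ∧ v ∈ B) ∨ (u ∈ B ∧ v ∈ A)) := by
  classical
  have hinjA : Function.Injective (fun i : Fin a => ((e (Sum.inl i)) : Fin n)) := by
    intro i j h
    have := e.injective (Subtype.ext h)
    exact Sum.inl_injective this
  have hinjB : Function.Injective (fun j : Fin b => ((e (Sum.inr j)) : Fin n)) := by
    intro i j h
    have := e.injective (Subtype.ext h)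
    exact Sum.inr_injective this
  have hmemA : ∀ u : Fin n, u ∈ A ↔ ∃ i, ((e (Sum.inl i)) : Fin n) = u := by
    intro u; simp [hA]
  have hmemB : ∀ u : Fin n, u ∈ B ↔ ∃ j, ((e (Sum.inr j)) : Fin n) = u := by
    intro u; simp [hB]
  refine ⟨?_, ?_, ?_, ?_⟩
  · rw [hA, Finset.card_image_of_injective _ hinjA]; simp
  · rw [hB, Finset.card_image_of_injective _ hinjB]; simp
  · ext v
    constructor
    · intro hv
      rcases h : e.symm ⟨v, hv⟩ with i | j
      · have : e (Sum.inl i) = ⟨v, hv⟩ := by rw [← h, e.apply_symm_apply]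
        exact Or.inl (by simpa using (hmemA v).mpr ⟨i, by rw [this]⟩)
      · have : e (Sum.inr j) = ⟨v, hv⟩ := by rw [← h, e.apply_symm_apply]
        exact Or.inr (by simpa using (hmemB v).mpr ⟨j, by rw [this]⟩)
    · intro hv
      rcases hv with hv | hv
      · obtain ⟨i, hi⟩ := (hmemA v).mp (by simpa using hv)
        exact hi ▸ (e (Sum.inl i)).2
      · obtain ⟨j, hj⟩ := (hmemB v).mp (by simpa using hv)
        exact hj ▸ (e (Sum.inr j)).2
  · intro u v
    constructor
    · intro h
      have hu : u ∈ G'.verts := G'.edge_vert h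
      have hv : v ∈ G'.verts := G'.edge_vert h.symm
      have hcoe : G'.coe.Adj ⟨u, hu⟩ ⟨v, hv⟩ := h
      have hkb : (Kbip a b).Adj (e.symm ⟨u, hu⟩) (e.symm ⟨v, hv⟩) := by
        rw [← e.map_rel_iff]
        simpa using hcoe
      have hue : ∀ x, e.symm ⟨u, hu⟩ = x → (e x : Fin n) = u := by
        rintro x rfl; rw [e.apply_symm_apply]
      have hve : ∀ x, e.symm ⟨v, hv⟩ = x → (e x : Fin n) = v := by
        rintro x rfl; rw [e.apply_symm_apply]
      rcases hx : e.symm ⟨u, hu⟩ with i | i <;> rcases hy : e.symm ⟨v, hv⟩ with j | j <;>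
        rw [hx, hy] at hkb <;> simp at hkb
      · exact Or.inl ⟨(hmemA u).mpr ⟨i, hue _ hx⟩, (hmemB v).mpr ⟨j, hve _ hy⟩⟩
      · exact Or.inr ⟨(hmemB u).mpr ⟨i, hue _ hx⟩, (hmemA v).mpr ⟨j, hve _ hy⟩⟩
    · intro h
      rcases h with ⟨hu, hv⟩ | ⟨hu, hv⟩
      · obtain ⟨i, hi⟩ := (hmemA u).mp hu
        obtain ⟨j, hj⟩ := (hmemB v).mp hv
        have : G'.coe.Adj (e (Sum.inl i)) (e (Sum.inr j)) := by
          rw [e.map_rel_iff]; simp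
        rw [← hi, ← hj]
        exact this
      · obtain ⟨i, hi⟩ := (hmemB u).mp hu
        obtain ⟨j, hj⟩ := (hmemA v).mp hv
        have : G'.coe.Adj (e (Sum.inr i)) (e (Sum.inl j)) := by
          rw [e.map_rel_iff]; simp
        rw [← hi, ← hj]
        exact this
end Aux

section Main
open Finset

lemma copyCount_le {n a b s t : ℕ} (hs : 0 < s) (ht : 0 < t)
    (hsa : s ≤ a) (hab : a ≤ b) (hbt : b ≤ t)
    {G : SimpleGraph (Fin n)} (hfree : ¬ ContainsCopy (Kbip s t) G) :
    _root_.copyCount (Kbip a b) G ≤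
      (t - 1).choose a * (t - 1 - s).choose (b - s) * n.choose s := by
  classical
  set T : Finset (Finset (Fin n) × Finset (Fin n) × Finset (Fin n)) :=
    (Finset.univ.powersetCard s).biUnion (fun S =>
      ((cn G S).powersetCard a).biUnion (fun A =>
        ((cn G (pick s A) \ S).powersetCard (b - s)).image (fun B' => (S, A, B')))) with hTdef
  let fA : {G' : G.Subgraph // Nonempty (Kbip a b ≃g G'.coe)} → Finset (Fin n) :=
    fun p => Finset.univ.image (fun i : Fin a => ((p.2.some (Sum.inl i)) : Fin n))
  let fB : {G' : G.Subgraph // Nonempty (Kbip a b ≃g G'.coe)} → Finset (Fin n) :=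
    fun p => Finset.univ.image (fun j : Fin b => ((p.2.some (Sum.inr j)) : Fin n))
  let Φ : {G' : G.Subgraph // Nonempty (Kbip a b ≃g G'.coe)} →
      Finset (Fin n) × Finset (Fin n) × Finset (Fin n) :=
    fun p => (pick s (fB p), fA p, fB p \ pick s (fB p))
  have struct : ∀ p : {G' : G.Subgraph // Nonempty (Kbip a b ≃g G'.coe)},
      (fA p).card = a ∧ (fB p).card = b ∧ (p.1.verts = ↑(fA p) ∪ ↑(fB p)) ∧
        ∀ u v, p.1.Adj u v ↔ ((u ∈ fA p ∧ v ∈ fB p) ∨ (u ∈ fB p ∧ v ∈ fA p)) :=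
    fun p => copy_struct p.2.some (fA p) (fB p) rfl rfl
  have hmemT : ∀ p, Φ p ∈ T := by
    intro p
    obtain ⟨hAcard, hBcard, hverts, hadj⟩ := struct p
    have hsB : s ≤ (fB p).card := by omega
    have hpickB : (pick s (fB p)).card = s := pick_card hsB
    have hAsub : fA p ⊆ cn G (pick s (fB p)) := by
      intro u hu
      exact mem_cn.mpr fun x hx =>
        p.1.adj_sub ((hadj u x).mpr (Or.inl ⟨hu, pick_subset _ _ hx⟩))
    have hsA : s ≤ (fA p).card := by omega
    have hB'sub : fB p \ pick s (fB p) ⊆ cn G (pick s (fA p)) \ pick s (fB p) := by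
      intro v hv
      obtain ⟨hvB, hvS⟩ := Finset.mem_sdiff.mp hv
      refine Finset.mem_sdiff.mpr ⟨mem_cn.mpr fun y hy => ?_, hvS⟩
      exact (p.1.adj_sub ((hadj y v).mpr (Or.inl ⟨pick_subset _ _ hy, hvB⟩))).symm
    rw [hTdef]
    refine Finset.mem_biUnion.mpr ⟨pick s (fB p), ?_, ?_⟩
    · exact Finset.mem_powersetCard.mpr ⟨Finset.subset_univ _, hpickB⟩
    refine Finset.mem_biUnion.mpr ⟨fA p, ?_, ?_⟩
    · exact Finset.mem_powersetCard.mpr ⟨hAsub, hAcard⟩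
    refine Finset.mem_image.mpr ⟨fB p \ pick s (fB p), ?_, rfl⟩
    refine Finset.mem_powersetCard.mpr ⟨hB'sub, ?_⟩
    rw [Finset.card_sdiff_of_subset (pick_subset _ _), hpickB, hBcard]
  have hinj : Function.Injective Φ := by
    intro p q h
    obtain ⟨hAp, hBp, hvp, hap⟩ := struct p
    obtain ⟨hAq, hBq, hvq, haq⟩ := struct q
    simp only [Φ, Prod.mk.injEq] at h
    obtain ⟨hS, hA, hB'⟩ := h
    have hB : fB p = fB q := by
      rw [← Finset.sdiff_union_of_subset (pick_subset s (fB p)),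
        ← Finset.sdiff_union_of_subset (pick_subset s (fB q)), hB', hS]
    apply Subtype.ext
    ext v w
    · rw [hvp, hvq, hA, hB]
    · rw [hap, haq, hA, hB]
  have hc1 : _root_.copyCount (Kbip a b) G ≤ T.card := by
    rw [_root_.copyCount, ← Fintype.card_coe T, ← Nat.card_eq_fintype_card]
    exact Nat.card_le_card_of_injective
      (fun p => (⟨Φ p, hmemT p⟩ : {x // x ∈ T}))
      (fun p q hpq => hinj (congrArg Subtype.val hpq))
  have hc2 : T.card ≤ n.choose s * ((t - 1).choose a * (t - 1 - s).choose (b - s)) := by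
    rw [hTdef]
    refine (Finset.card_biUnion_le_card_mul _ _ ((t - 1).choose a * (t - 1 - s).choose (b - s)) ?_).trans ?_
    · intro S hS
      obtain ⟨-, hScard⟩ := Finset.mem_powersetCard.mp hS
      refine (Finset.card_biUnion_le_card_mul _ _ ((t - 1 - s).choose (b - s)) ?_).trans ?_
      · intro A hA
        obtain ⟨hAsub, hAcard⟩ := Finset.mem_powersetCard.mp hA
        refine Finset.card_image_le.trans ?_
        rw [Finset.card_powersetCard]
        apply Nat.choose_le_choose
        have hpc : (pick s A).card = s := pick_card (hsa.trans_eq hAcard.symm)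
        have hcn : (cn G (pick s A)).card ≤ t - 1 := cn_card_le ht hfree hpc
        have hSsub : S ⊆ cn G (pick s A) := by
          intro v hv
          exact mem_cn.mpr fun y hy =>
            ((mem_cn.mp (hAsub (pick_subset s A hy))) v hv).symm
        rw [Finset.card_sdiff_of_subset hSsub, hScard]
        omega
      · rw [Finset.card_powersetCard]
        exact Nat.mul_le_mul_right _ (Nat.choose_le_choose _ (cn_card_le ht hfree hScard))
    · rw [Finset.card_powersetCard, Finset.card_univ, Fintype.card_fin]
  calc _root_.copyCount (Kbip a b) G ≤ T.card := hc1
    _ ≤ n.choose s * ((t - 1).choose a * (t - 1 - s).choose (b - s)) := hc2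
    _ = (t - 1).choose a * (t - 1 - s).choose (b - s) * n.choose s := by ring

end Main

/-- if `s ≤ a ≤ b ≤ t`, then for every positive `n`,
`ex(n, K_{a,b}, K_{s,t}) ≤ C(t-1,a)·C(t-1-s,b-s)·C(n,s)`. -/
theorem stmt18 (a b s t : ℕ) (hs : 0 < s) (ha : 0 < a) (hb : 0 < b) (ht : 0 < t)
    (hsa : s ≤ a) (hab : a ≤ b) (hbt : b ≤ t) (n : ℕ) (hn : 0 < n) :
    exGen n (Kbip a b) (Kbip s t) ≤
      Nat.choose (t - 1) a * Nat.choose (t - 1 - s) (b - s) * Nat.choose n s := by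
  apply csSup_le'
  rintro m ⟨G, hfree, rfl⟩
  exact copyCount_le hs ht hsa hab hbt hfree
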